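/- (Leading-order photon efficiency of on-off keying with direct detection.) Let h(x) = -x ln x - (1-x) ln(1-x) (binary entropy in nats, 0 ln 0 = 0), and for E > 0 define C(E) = sup over p ∈ (0, 1] of [ h( p (1 - e^{-E/p}) ) - p · h( e^{-E/p} ) ], the Shannon capacity in nats per symbol of the Z-channel induced by direct detection of the on-off-keying alphabet {|0⟩, |√(E/p)⟩} with on-pulse prior p under the mean-energy constraint p·(E/p) = E. Then lim_{E → 0⁺} C(E) / ( -E ln E ) = 1, i.e. the OOK-direct-detection photon efficiency satisfies C(E)/E = (-ln E)(1 + o(1)) nats per photon as E → 0⁺. -/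

import Mathlib

open Filter Topology

private lemma ook_aux1 (u : ℝ) (h0 : 0 ≤ u) (h1 : u ≤ 1) :
    -u * Real.log u ≤ Real.binEntropy u := by
  rw [Real.binEntropy, Real.log_inv, Real.log_inv]
  have h2 : 0 ≤ (1 - u) * -Real.log (1 - u) :=
    mul_nonneg (by linarith) (neg_nonneg.2 (Real.log_nonpos (by linarith) (by linarith)))
  nlinarith

private lemma ook_aux2 (u : ℝ) (h0 : 0 ≤ u) (h1 : u ≤ 1) :
    Real.binEntropy u ≤ -u * Real.log u + u := by
  rw [Real.binEntropy, Real.log_inv, Real.log_inv]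
  rcases eq_or_lt_of_le h1 with h | h
  · simp [h]
  · have h1u : 0 < 1 - u := by linarith
    have := Real.log_le_sub_one_of_pos (inv_pos.2 h1u)
    have hinv : (1 - u)⁻¹ - 1 = u / (1 - u) := by field_simp; ring
    have hlog : -Real.log (1 - u) = Real.log (1 - u)⁻¹ := (Real.log_inv _).symm
    have h3 : (1 - u) * -Real.log (1 - u) ≤ u := by
      rw [hlog]
      calc (1 - u) * Real.log (1 - u)⁻¹ ≤ (1 - u) * ((1 - u)⁻¹ - 1) := by
            exact mul_le_mul_of_nonneg_left this (le_of_lt h1u)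
        _ = u := by field_simp; ring
    nlinarith

/-- each mutual information is at most `binEntropy E` when `0 < E ≤ 1/2`. -/
private lemma ook_aux_le (E p : ℝ) (hE0 : 0 < E) (hE2 : E ≤ 2⁻¹) (hp : p ∈ Set.Ioc (0:ℝ) 1) :
    Real.binEntropy (p * (1 - Real.exp (-(E / p)))) - p * Real.binEntropy (Real.exp (-(E / p)))
      ≤ Real.binEntropy E := by
  obtain ⟨hp0, hp1⟩ := hp
  have hx : 0 < E / p := div_pos hE0 hp0
  have hq0 : 0 ≤ 1 - Real.exp (-(E / p)) := by
    have : Real.exp (-(E / p)) ≤ 1 := Real.exp_le_one_iff.2 (by linarith)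
    linarith
  have hqx : 1 - Real.exp (-(E / p)) ≤ E / p := by
    have := Real.add_one_le_exp (-(E / p)); linarith
  have hpq : p * (1 - Real.exp (-(E / p))) ≤ E := by
    calc p * (1 - Real.exp (-(E / p))) ≤ p * (E / p) := by
          exact mul_le_mul_of_nonneg_left hqx (le_of_lt hp0)
      _ = E := by field_simp
  have hmono : Real.binEntropy (p * (1 - Real.exp (-(E / p)))) ≤ Real.binEntropy E := by
    apply Real.binEntropy_strictMonoOn.monotoneOn
    · exact ⟨mul_nonneg (le_of_lt hp0) hq0, hpq.trans hE2⟩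
    · exact ⟨le_of_lt hE0, hE2⟩
    · exact hpq
  have hnn : 0 ≤ p * Real.binEntropy (Real.exp (-(E / p))) :=
    mul_nonneg (le_of_lt hp0)
      (Real.binEntropy_nonneg (Real.exp_nonneg _) (Real.exp_le_one_iff.2 (by linarith)))
  linarith

/-- Leading-order photon efficiency of on-off keying with direct detection:
`C(E)/(-E ln E) → 1` as `E → 0⁺`, where
`C(E) = sup_{p ∈ (0,1]} [h(p(1 - e^{-E/p})) - p·h(e^{-E/p})]`. -/
theorem ook_direct_detection_photon_efficiency_leading_order :
    Tendsto
      (fun E : ℝ =>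
        sSup ((fun p : ℝ =>
            Real.binEntropy (p * (1 - Real.exp (-(E / p))))
              - p * Real.binEntropy (Real.exp (-(E / p)))) '' Set.Ioc 0 1)
          / (-(E * Real.log E)))
      (𝓝[>] 0) (𝓝 1) := by
  set F : ℝ → ℝ := fun E =>
    sSup ((fun p : ℝ =>
        Real.binEntropy (p * (1 - Real.exp (-(E / p))))
          - p * Real.binEntropy (Real.exp (-(E / p)))) '' Set.Ioc 0 1) with hF
  -- lower and upper comparison functions
  set lo : ℝ → ℝ := fun E =>
    (1 - (-Real.log E)⁻¹) *
      (1 - Real.log (-Real.log E) / (-Real.log E) - (-Real.log E)⁻¹) with hlo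
  set hi : ℝ → ℝ := fun E => 1 + (-Real.log E)⁻¹ with hhi
  have hL : Tendsto (fun E : ℝ => -Real.log E) (𝓝[>] 0) atTop :=
    tendsto_neg_atBot_atTop.comp Real.tendsto_log_nhdsGT_zero
  have hinv : Tendsto (fun E : ℝ => (-Real.log E)⁻¹) (𝓝[>] 0) (𝓝 0) :=
    tendsto_inv_atTop_zero.comp hL
  have hlogdiv : Tendsto (fun x : ℝ => Real.log x / x) atTop (𝓝 0) :=
    Real.isLittleO_log_id_atTop.tendsto_div_nhds_zero
  have hlodiv : Tendsto (fun E : ℝ => Real.log (-Real.log E) / (-Real.log E)) (𝓝[>] 0) (𝓝 0) :=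
    hlogdiv.comp hL
  have hloT : Tendsto lo (𝓝[>] 0) (𝓝 1) := by
    have : Tendsto lo (𝓝[>] 0) (𝓝 ((1 - 0) * (1 - 0 - 0))) :=
      ((tendsto_const_nhds).sub hinv).mul
        (((tendsto_const_nhds).sub hlodiv).sub hinv)
    simpa using this
  have hhiT : Tendsto hi (𝓝[>] 0) (𝓝 1) := by
    have : Tendsto hi (𝓝[>] 0) (𝓝 (1 + 0)) := (tendsto_const_nhds).add hinv
    simpa using this
  refine tendsto_of_tendsto_of_tendsto_of_le_of_le' hloT hhiT ?_ ?_
  all_goals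
    have hmem : Set.Ioo (0:ℝ) (Real.exp (-3)) ∈ 𝓝[>] (0:ℝ) :=
      Ioo_mem_nhdsGT_of_mem ⟨le_refl 0, Real.exp_pos _⟩
  -- Lower bound
  · filter_upwards [hmem] with E hE
    obtain ⟨hE0, hE3⟩ := hE
    set L : ℝ := -Real.log E with hLdef
    have hL3 : 3 ≤ L := by
      have : Real.log E ≤ -3 := by
        rw [Real.log_le_iff_le_exp hE0]; exact le_of_lt hE3
      simp [hLdef]; linarith
    have hL0 : 0 < L := by linarith
    have hE2 : E ≤ 2⁻¹ := by
      have h4 : (4:ℝ) ≤ Real.exp 3 := by have := Real.add_one_le_exp (3:ℝ); linarith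
      have : Real.exp (-3) ≤ 4⁻¹ := by
        rw [Real.exp_neg]
        exact inv_anti₀ (by norm_num) h4
      linarith
    have hE1 : E ≤ 1 := by linarith
    have hD : 0 < E * L := mul_pos hE0 hL0
    -- the chosen prior p₀ = E * L
    have hp₀0 : 0 < E * L := hD
    have hp₀1 : E * L ≤ 1 := by
      have hlogi : Real.log E⁻¹ ≤ E⁻¹ - 1 := Real.log_le_sub_one_of_pos (inv_pos.2 hE0)
      have hLi : L = Real.log E⁻¹ := by rw [Real.log_inv]
      calc E * L = E * Real.log E⁻¹ := by rw [hLi]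
        _ ≤ E * (E⁻¹ - 1) := mul_le_mul_of_nonneg_left hlogi (le_of_lt hE0)
        _ = 1 - E := by field_simp
        _ ≤ 1 := by linarith
    have hxL : E / (E * L) = L⁻¹ := by field_simp
    set t : ℝ := L⁻¹ with htdef
    have ht0 : 0 < t := inv_pos.2 hL0
    have ht1 : t ≤ 3⁻¹ := by
      rw [htdef]; exact inv_anti₀ (by norm_num) hL3
    have ht1' : t < 1 := lt_of_le_of_lt ht1 (by norm_num)
    set q : ℝ := 1 - Real.exp (-t) with hqdef
    have hexp1 : Real.exp (-t) < 1 := Real.exp_lt_one_iff.2 (by linarith)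
    have hq0 : 0 < q := by simp [hqdef]; linarith
    have hqub : q ≤ t := by
      have := Real.add_one_le_exp (-t); simp [hqdef]; linarith
    have hqlb : t * (1 - t) ≤ q := by
      have h1 := Real.add_one_le_exp t
      have h2 := Real.add_one_le_exp (-t)
      have h3 : Real.exp (-t) * Real.exp t = 1 := by
        rw [← Real.exp_add]; simp
      have h4 : 0 < Real.exp (-t) := Real.exp_pos _
      -- 1 - exp(-t) = exp(-t)(exp t - 1) ≥ exp(-t) * t ≥ (1-t) t
      have h5 : 1 - Real.exp (-t) ≥ Real.exp (-t) * t := by nlinarith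
      have h6 : Real.exp (-t) * t ≥ (1 - t) * t := by nlinarith
      simp [hqdef]; nlinarith
    have hq1 : q ≤ 1 := by simp [hqdef]; positivity
    -- value at p₀
    have hpq0 : 0 < E * L * q := mul_pos hD hq0
    have hpq1 : E * L * q ≤ E := by
      calc E * L * q ≤ E * L * t := mul_le_mul_of_nonneg_left hqub (le_of_lt hD)
        _ = E := by rw [htdef]; field_simp
    have hb1 : -(E * L * q) * Real.log (E * L * q) ≤ Real.binEntropy (E * L * q) :=
      ook_aux1 _ (le_of_lt hpq0) (hpq1.trans hE1)
    have hb2 : Real.binEntropy q ≤ -q * Real.log q + q := ook_aux2 _ (le_of_lt hq0) hq1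
    have hlogmul : Real.log (E * L * q) = Real.log (E * L) + Real.log q :=
      Real.log_mul (ne_of_gt hD) (ne_of_gt hq0)
    have hlogEL : Real.log (E * L) = -L + Real.log L :=
      by rw [Real.log_mul (ne_of_gt hE0) (ne_of_gt hL0)]; simp [hLdef]
    have hLlog : Real.log L ≤ L - 1 := Real.log_le_sub_one_of_pos hL0
    have hcoef : 0 ≤ L - Real.log L - 1 := by linarith
    -- mutual information at p₀ lower bound
    have hval : E * (1 - t) * (L - Real.log L - 1) ≤
        Real.binEntropy (E * L * q) - (E * L) * Real.binEntropy q := by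
      have key : (E * L * q) * (L - Real.log L - 1) ≤
          Real.binEntropy (E * L * q) - (E * L) * Real.binEntropy q := by
        have e1 : -(E * L * q) * Real.log (E * L * q) - (E * L) * (-q * Real.log q + q)
            = (E * L * q) * (L - Real.log L - 1) := by
          rw [hlogmul, hlogEL]; ring
        have e2 : (E * L) * Real.binEntropy q ≤ (E * L) * (-q * Real.log q + q) :=
          mul_le_mul_of_nonneg_left hb2 (le_of_lt hD)
        linarith
      have hpqlb : E * (1 - t) ≤ E * L * q := by
        have : E * L * (t * (1 - t)) ≤ E * L * q := mul_le_mul_of_nonneg_left hqlb (le_of_lt hD)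
        calc E * (1 - t) = E * L * (t * (1 - t)) := by rw [htdef]; field_simp
          _ ≤ E * L * q := this
      calc E * (1 - t) * (L - Real.log L - 1)
          ≤ (E * L * q) * (L - Real.log L - 1) := mul_le_mul_of_nonneg_right hpqlb hcoef
        _ ≤ _ := key
    -- membership in the set
    have hmemset : Real.binEntropy (E * L * q) - (E * L) * Real.binEntropy q ∈
        ((fun p : ℝ =>
            Real.binEntropy (p * (1 - Real.exp (-(E / p))))
              - p * Real.binEntropy (Real.exp (-(E / p)))) '' Set.Ioc 0 1) := by
      refine ⟨E * L, ⟨hp₀0, hp₀1⟩, ?_⟩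
      have hsym : Real.binEntropy (Real.exp (-t)) = Real.binEntropy q := by
        rw [hqdef, Real.binEntropy_one_sub]
      dsimp only
      rw [hxL, show (1 - Real.exp (-t)) = q from hqdef.symm, hsym]
    have hbdd : BddAbove ((fun p : ℝ =>
        Real.binEntropy (p * (1 - Real.exp (-(E / p))))
          - p * Real.binEntropy (Real.exp (-(E / p)))) '' Set.Ioc 0 1) := by
      refine ⟨Real.binEntropy E, ?_⟩
      rintro y ⟨p, hp, rfl⟩
      exact ook_aux_le E p hE0 hE2 hp
    have hle : Real.binEntropy (E * L * q) - (E * L) * Real.binEntropy q ≤ F E :=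
      le_csSup hbdd hmemset
    -- convert to the division form
    have hD' : 0 < -(E * Real.log E) := by
      have : -(E * Real.log E) = E * L := by rw [hLdef]; ring
      rw [this]; exact hD
    rw [le_div_iff₀ hD']
    have heq : lo E * -(E * Real.log E) = E * (1 - t) * (L - Real.log L - 1) := by
      rw [hlo]
      simp only [← hLdef, ← htdef]
      have : -(E * Real.log E) = E * L := by rw [hLdef]; ring
      rw [this, htdef]
      field_simp
    rw [heq]
    exact le_trans hval hle
  -- Upper bound
  · filter_upwards [hmem] with E hE
    obtain ⟨hE0, hE3⟩ := hE
    set L : ℝ := -Real.log E with hLdef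
    have hL3 : 3 ≤ L := by
      have : Real.log E ≤ -3 := by
        rw [Real.log_le_iff_le_exp hE0]; exact le_of_lt hE3
      simp [hLdef]; linarith
    have hL0 : 0 < L := by linarith
    have hE2 : E ≤ 2⁻¹ := by
      have h4 : (4:ℝ) ≤ Real.exp 3 := by have := Real.add_one_le_exp (3:ℝ); linarith
      have : Real.exp (-3) ≤ 4⁻¹ := by
        rw [Real.exp_neg]
        exact inv_anti₀ (by norm_num) h4
      linarith
    have hD : 0 < E * L := mul_pos hE0 hL0
    have hD' : 0 < -(E * Real.log E) := by
      have : -(E * Real.log E) = E * L := by rw [hLdef]; ring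
      rw [this]; exact hD
    rw [div_le_iff₀ hD']
    have hne : ((fun p : ℝ =>
        Real.binEntropy (p * (1 - Real.exp (-(E / p))))
          - p * Real.binEntropy (Real.exp (-(E / p)))) '' Set.Ioc 0 1).Nonempty :=
      ⟨_, ⟨1, ⟨zero_lt_one, le_refl 1⟩, rfl⟩⟩
    have hsup : F E ≤ Real.binEntropy E := by
      refine csSup_le hne ?_
      rintro y ⟨p, hp, rfl⟩
      exact ook_aux_le E p hE0 hE2 hp
    have hbe : Real.binEntropy E ≤ -E * Real.log E + E :=
      ook_aux2 _ (le_of_lt hE0) (by linarith)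
    have heq : hi E * -(E * Real.log E) = E * L + E := by
      rw [hhi]
      simp only [← hLdef]
      have : -(E * Real.log E) = E * L := by rw [hLdef]; ring
      rw [this]
      field_simp
    rw [heq]
    have : -E * Real.log E + E = E * L + E := by rw [hLdef]; ring
    linarith
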